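/- arXiv:2410.10460 — 6 statements merged into one kernel-verified Lean document; each statement's English description precedes it below -/
import Mathlib

section
/- Let M = (S, Act, P) be an MDP, φ ⊆ S a safety property, and σ a shield for φ over the induced LTS T_M. Then every outcome of every policy of the shielded MDP M_σ that starts in a state winning for φ (in T_M) is safe with respect to φ. -/
/-- The enabled actions in a state of an LTS with transition relation `Tr`. -/
def Enabled {S A : Type*} (Tr : S → A → S → Prop) (s : S) : Set A :=
  {a | ∃ s', Tr s a s'}

/-- The transition relation has no dead ends. -/
def NoDeadEnds {S A : Type*} (Tr : S → A → S → Prop) : Prop :=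
  ∀ s, ∃ a s', Tr s a s'

/-- A (nondeterministic) strategy: nonempty sets of enabled actions. -/
def IsStrategy {S A : Type*} (Tr : S → A → S → Prop) (σ : S → Set A) : Prop :=
  ∀ s, (σ s).Nonempty ∧ σ s ⊆ Enabled Tr s

/-- An (infinite) run of the LTS: alternating states and actions following `Tr`. -/
def IsRun {S A : Type*} (Tr : S → A → S → Prop) (st : ℕ → S) (ac : ℕ → A) : Prop :=
  ∀ i, Tr (st i) (ac i) (st (i + 1))

/-- A run is an outcome of a strategy if every action is allowed by the strategy. -/
def IsOutcome {S A : Type*} (σ : S → Set A) (st : ℕ → S) (ac : ℕ → A) : Prop :=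
  ∀ i, ac i ∈ σ (st i)

/-- A run is safe w.r.t. a safety property `φ` if all its states lie in `φ`. -/
def SafeRun {S : Type*} (φ : Set S) (st : ℕ → S) : Prop :=
  ∀ i, st i ∈ φ

/-- A state is winning for `φ` if some strategy has only safe outcomes from it. -/
def WinningState {S A : Type*} (Tr : S → A → S → Prop) (φ : Set S) (s : S) : Prop :=
  ∃ σ, IsStrategy Tr σ ∧
    ∀ st ac, IsRun Tr st ac → IsOutcome σ st ac → st 0 = s → SafeRun φ st

/-- A shield for `φ`: a strategy all of whose outcomes starting in any winning
state are safe. -/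
def IsShield {S A : Type*} (Tr : S → A → S → Prop) (φ : Set S) (σ : S → Set A) : Prop :=
  IsStrategy Tr σ ∧
    ∀ st ac, IsRun Tr st ac → IsOutcome σ st ac →
      WinningState Tr φ (st 0) → SafeRun φ st

/-- The transition relation filtered by an action filter `F` (e.g. a shield):
only transitions whose action is allowed by `F` are kept. -/
def FilterTr {S A : Type*} (Tr : S → A → S → Prop) (F : S → Set A) :
    S → A → S → Prop :=
  fun s a s' => Tr s a s' ∧ a ∈ F s

/-- `P` is (the transition function of) an MDP: values in `[0,1]`, every row sums
to `0` or `1`, and in every state at least one action has row sum `1`. -/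
def IsMDP {S A : Type*} [Fintype S] (P : S → A → S → ℝ) : Prop :=
  (∀ s a s', 0 ≤ P s a s' ∧ P s a s' ≤ 1) ∧
  (∀ s a, (∑ s', P s a s') = 0 ∨ (∑ s', P s a s') = 1) ∧
  (∀ s, ∃ a, (∑ s', P s a s') = 1)

/-- The induced LTS of an MDP: transitions are the positive-probability ones. -/
def InducedTr {S A : Type*} (P : S → A → S → ℝ) : S → A → S → Prop :=
  fun s a s' => 0 < P s a s'

/-- A (probabilistic, memoryless) policy for the MDP `P`: a probability
distribution over the enabled actions in every state. -/
def IsPolicy {S A : Type*} [Fintype A] (P : S → A → S → ℝ) (π : S → A → ℝ) : Prop :=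
  ∀ s, (∀ a, 0 ≤ π s a ∧ π s a ≤ 1) ∧
    (∀ a, a ∉ Enabled (InducedTr P) s → π s a = 0) ∧
    (∑ a, π s a) = 1

/-- The shielded MDP `M_σ`: probabilities of actions not allowed by `σ` are set to `0`. -/
noncomputable def ShieldedP {S A : Type*} (P : S → A → S → ℝ) (σ : S → Set A) :
    S → A → S → ℝ :=
  fun s a s' => (σ s).indicator (fun _ => P s a s') a

/-- **A shielded MDP is safe.**
If `σ` is a shield for `φ` over the induced LTS of the MDP `P`, then every outcome of
every policy of the shielded MDP `M_σ` that starts in a state winning for `φ`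
(in the induced LTS) is safe w.r.t. `φ`. -/
theorem shielded_mdp_safe {S A : Type*} [Fintype S] [Fintype A]
    (P : S → A → S → ℝ) (hP : IsMDP P) (φ : Set S)
    (σ : S → Set A) (hσ : IsShield (InducedTr P) φ σ)
    (π : S → A → ℝ) (hπ : IsPolicy (ShieldedP P σ) π)
    (st : ℕ → S) (ac : ℕ → A)
    (hrun : IsRun (InducedTr (ShieldedP P σ)) st ac)
    (hout : ∀ i, 0 < π (st i) (ac i))
    (hwin : WinningState (InducedTr P) φ (st 0)) :
    SafeRun φ st := by
  have key : ∀ i, InducedTr P (st i) (ac i) (st (i+1)) ∧ ac i ∈ σ (st i) := by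
    intro i
    have h := hrun i
    unfold InducedTr ShieldedP at h
    by_cases hm : ac i ∈ σ (st i)
    · rw [Set.indicator_of_mem hm] at h; exact ⟨h, hm⟩
    · rw [Set.indicator_of_notMem hm] at h; exact absurd h (lt_irrefl 0)
  exact hσ.2 st ac (fun i => (key i).1) (fun i => (key i).2) hwin
end

section
/- Let T be an n-agent LTS with projections prj_i, let φ_i ⊆ S be an agent safety property, and let σ_i be a local shield of agent i, i.e., a shield for the projected LTS T^i with respect to the restricted projection r-prj_i(φ_i). Then every run of the filtered LTS T_{ext(σ_i)} that starts in a state s such that prj_i(s) is winning for r-prj_i(φ_i) in T^i is safe with respect to φ_i. -/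
/-- The projection of a global state (a vector over variables `V`) to the
coordinates in `I`. -/
def Prj {V : Type*} {D : V → Type*} (I : Set V) (s : ∀ v, D v) :
    ∀ v : I, D (v : V) :=
  fun v => s v.1

/-- The extension of a set `ψ` of observations: all global states whose
projection lies in `ψ` (the union of the extensions `⟨o⟩` of its elements). -/
def ExtSet {V : Type*} {D : V → Type*} (I : Set V)
    (ψ : Set (∀ v : I, D (v : V))) : Set (∀ v, D v) :=
  {s | Prj I s ∈ ψ}

/-- The restricted projection of `φ`: those observations `o` whose extension
`⟨o⟩ = {s | Prj I s = o}` is entirely contained in `φ`. -/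
def RPrj {V : Type*} {D : V → Type*} (I : Set V) (φ : Set (∀ v, D v)) :
    Set (∀ v : I, D (v : V)) :=
  {o | ∀ s, Prj I s = o → s ∈ φ}

/-- The transition relation of the projected LTS `T^i` of agent `i`, which
observes the coordinates in `I` and controls the `i`-th action component. -/
def ProjTr {V : Type*} {D : V → Type*} {n : ℕ} {Act : Fin n → Type*}
    (Tr : (∀ v, D v) → (∀ i, Act i) → (∀ v, D v) → Prop)
    (I : Set V) (i : Fin n) :
    (∀ v : I, D (v : V)) → Act i → (∀ v : I, D (v : V)) → Prop :=
  fun o b o' => ∃ s a s', Tr s a s' ∧ Prj I s = o ∧ a i = b ∧ Prj I s' = o'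

/-- The extended shield of a local strategy `σi` of agent `i`: it allows all
global actions whose `i`-th component is allowed by `σi` in the projection. -/
def ExtShield {V : Type*} {D : V → Type*} {n : ℕ} {Act : Fin n → Type*}
    (I : Set V) (i : Fin n)
    (σi : (∀ v : I, D (v : V)) → Set (Act i)) :
    (∀ v, D v) → Set (∀ i, Act i) :=
  fun s => {a | a i ∈ σi (Prj I s)}

/-- **Extended local shields are safe, Lemma 2.**
If `σi` is a local shield of agent `i`, i.e. a shield for the projected LTS `T^i`
w.r.t. the restricted projection `RPrj I φi`, then every run of the filtered LTS
`T_{ext(σi)}` starting in a state whose projection is winning in `T^i` is safe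
w.r.t. `φi`. -/
theorem extended_local_shield_safe
    {V : Type*} {D : V → Type*} {n : ℕ} {Act : Fin n → Type*}
    [Finite V] [∀ v, Finite (D v)] [∀ v, Nonempty (D v)] [∀ i, Finite (Act i)]
    (Tr : (∀ v, D v) → (∀ i, Act i) → (∀ v, D v) → Prop) (hT : NoDeadEnds Tr)
    (I : Set V) (i : Fin n) (φi : Set (∀ v, D v))
    (σi : (∀ v : I, D (v : V)) → Set (Act i))
    (hσ : IsShield (ProjTr Tr I i) (RPrj I φi) σi)
    (st : ℕ → ∀ v, D v) (ac : ℕ → ∀ j, Act j)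
    (hrun : IsRun (FilterTr Tr (ExtShield I i σi)) st ac)
    (hwin : WinningState (ProjTr Tr I i) (RPrj I φi) (Prj I (st 0))) :
    SafeRun φi st := by
  have hprun : IsRun (ProjTr Tr I i) (fun m => Prj I (st m)) (fun m => ac m i) :=
    fun m => ⟨st m, ac m, st (m + 1), (hrun m).1, rfl, rfl, rfl⟩
  have hout : IsOutcome σi (fun m => Prj I (st m)) (fun m => ac m i) :=
    fun m => (hrun m).2
  have hsafe := hσ.2 _ _ hprun hout hwin
  exact fun k => hsafe k (st k) rfl
end

section
/- (Projection-based shield synthesis.) Let T be an n-agent LTS with projections prj_i and let φ = ∩_{i=1}^n φ_i be an n-agent safety property. For each i ∈ {1,...,n}, let σ_i be a local shield of agent i, i.e., a shield for the projected LTS T^i with respect to r-prj_i(φ_i). Define the action filter F(s) = ∩_{i=1}^n ext(σ_i)(s). Then every run of the filtered LTS T_F that starts in a state s such that prj_i(s) is winning for r-prj_i(φ_i) in T^i for every i is safe with respect to φ. -/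
/-- **Projection-based shield synthesis, Theorem 1.**
Let `φ = ⋂ i, φ i` be an `n`-agent safety property and, for each agent `i`, let
`σ i` be a local shield for the projected LTS `T^i` w.r.t. `RPrj (I i) (φ i)`.
Then every run of the LTS filtered by `F s = ⋂ i, ext(σ i) s`, starting in a
state whose projections are winning in every `T^i`, is safe w.r.t. `φ`. -/
theorem projection_based_shield_synthesis
    {V : Type*} {D : V → Type*} {n : ℕ} {Act : Fin n → Type*}
    [Finite V] [∀ v, Finite (D v)] [∀ v, Nonempty (D v)] [∀ i, Finite (Act i)]
    (Tr : (∀ v, D v) → (∀ i, Act i) → (∀ v, D v) → Prop) (hT : NoDeadEnds Tr)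
    (I : Fin n → Set V) (φ : Fin n → Set (∀ v, D v))
    (σ : ∀ i : Fin n, (∀ v : I i, D (v : V)) → Set (Act i))
    (hσ : ∀ i, IsShield (ProjTr Tr (I i) i) (RPrj (I i) (φ i)) (σ i))
    (st : ℕ → ∀ v, D v) (ac : ℕ → ∀ j, Act j)
    (hrun : IsRun (FilterTr Tr (fun s => ⋂ i, ExtShield (I i) i (σ i) s)) st ac)
    (hwin : ∀ i, WinningState (ProjTr Tr (I i) i) (RPrj (I i) (φ i)) (Prj (I i) (st 0))) :
    SafeRun (⋂ i, φ i) st := by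
  intro k
  rw [Set.mem_iInter]
  intro i
  have hmem : ∀ m, ac m i ∈ σ i (Prj (I i) (st m)) := by
    intro m
    have := (hrun m).2
    rw [Set.mem_iInter] at this
    exact this i
  have hrun' : IsRun (ProjTr Tr (I i) i)
      (fun m => Prj (I i) (st m)) (fun m => ac m i) := by
    intro m
    exact ⟨st m, ac m, st (m+1), (hrun m).1, rfl, rfl, rfl⟩
  have hsafe := (hσ i).2 _ _ hrun' (fun m => hmem m) (hwin i)
  exact hsafe k (st k) rfl
end

section
/- (Assume-guarantee shield synthesis.) Let T be an n-agent LTS with projections prj_i and let φ = ∩_{i=1}^n φ_i be an n-agent safety property. For i = 1,...,n, let Θ_i denote the most permissive shield of T with respect to ∩_{j<i} φ_j (for i = 1 this is with respect to S, so T_{Θ_1} = T), and assume σ_i is a shield for the projected LTS (T_{Θ_i})^i with respect to r-prj_i(φ_i). Define the action filter F(s) = ∩_{i=1}^n ext(σ_i)(s) and assume F is a strategy of T (i.e., the composition ⊓_i ext(σ_i) exists). Then every run of the filtered LTS T_F starting in a state s such that, for every i, s is winning for ∩_{j<i} φ_j in T and prj_i(s) is winning for r-prj_i(φ_i) in (T_{Θ_i})^i,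 is safe with respect to φ. -/
/-- The most permissive shield for `φ`: the union of all shields for `φ`. -/
def MPS {S A : Type*} (Tr : S → A → S → Prop) (φ : Set S) : S → Set A :=
  fun s => {a | ∃ σ, IsShield Tr φ σ ∧ a ∈ σ s}

/-- Any strategy admits an infinite outcome run from any start state. -/
lemma exists_outcome {S A : Type*} {Tr : S → A → S → Prop} {σ : S → Set A}
    (h : IsStrategy Tr σ) (s : S) :
    ∃ st ac, IsRun Tr st ac ∧ IsOutcome σ st ac ∧ st 0 = s := by
  have h' : ∀ t, ∃ p : A × S, p.1 ∈ σ t ∧ Tr t p.1 p.2 := by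
    intro t
    obtain ⟨a, ha⟩ := (h t).1
    obtain ⟨s', hs'⟩ := (h t).2 ha
    exact ⟨(a, s'), ha, hs'⟩
  choose f hf1 hf2 using h'
  refine ⟨fun n => Nat.rec s (fun _ t => (f t).2) n,
    fun n => (f (Nat.rec s (fun _ t => (f t).2) n)).1, fun i => hf2 _, fun i => hf1 _, rfl⟩

/-- A winning state belongs to the safety property. -/
lemma winning_mem {S A : Type*} {Tr : S → A → S → Prop} {φ' : Set S} {s : S}
    (hw : WinningState Tr φ' s) : s ∈ φ' := by
  obtain ⟨σw, hsw, hsafe⟩ := hw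
  obtain ⟨st, ac, hr, ho, h0⟩ := exists_outcome hsw s
  have := hsafe st ac hr ho h0 0
  rwa [h0] at this

/-- If all outcomes of a strategy from `t` are safe, any successor of `t` under
an allowed action is winning. -/
lemma winning_succ {S A : Type*} {Tr : S → A → S → Prop} {φ' : Set S}
    {σw : S → Set A} {t t' : S} {b : A} (hsw : IsStrategy Tr σw)
    (hsafe : ∀ st ac, IsRun Tr st ac → IsOutcome σw st ac → st 0 = t → SafeRun φ' st)
    (hb : b ∈ σw t) (ht : Tr t b t') : WinningState Tr φ' t' := by
  refine ⟨σw, hsw, fun st ac hrun hout h0 => ?_⟩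
  have hrun' : IsRun Tr (fun n => Nat.casesOn n t st) (fun n => Nat.casesOn n b ac) := by
    intro i
    cases i with
    | zero => simpa [h0] using ht
    | succ n => exact hrun n
  have hout' : IsOutcome σw (fun n => Nat.casesOn n t st) (fun n => Nat.casesOn n b ac) := by
    intro i
    cases i with
    | zero => exact hb
    | succ n => exact hout n
  have hs := hsafe _ _ hrun' hout' rfl
  intro i
  exact hs (i + 1)

/-- Winning states are preserved along shield-allowed transitions. -/
lemma shield_step {S A : Type*} {Tr : S → A → S → Prop} {φ' : Set S}
    {σ' : S → Set A} (hσ : IsShield Tr φ' σ') {o o' : S} {b : A}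
    (hw : WinningState Tr φ' o) (hb : b ∈ σ' o) (ht : Tr o b o') :
    WinningState Tr φ' o' :=
  winning_succ hσ.1 (fun st ac hr ho h0 => hσ.2 st ac hr ho (h0 ▸ hw)) hb ht

/-- Membership in the most permissive shield: an enabled action all of whose
successors are winning belongs to some shield. -/
lemma mps_mem {S A : Type*} {Tr : S → A → S → Prop} (hne : NoDeadEnds Tr)
    {φ' : Set S} {s : S} {a : A} (hE : a ∈ Enabled Tr s)
    (hsucc : ∀ s', Tr s a s' → WinningState Tr φ' s') : a ∈ MPS Tr φ' s := by
  classical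
  set sig : S → Set A := fun t =>
    {b ∈ Enabled Tr t | WinningState Tr φ' t → ∀ t', Tr t b t' → WinningState Tr φ' t'}
    with hsigdef
  have hstrat : IsStrategy Tr sig := by
    intro t
    constructor
    · by_cases hw : WinningState Tr φ' t
      · obtain ⟨σw, hsw, hsafe⟩ := hw
        obtain ⟨b, hb⟩ := (hsw t).1
        exact ⟨b, (hsw t).2 hb, fun _ t' ht' => winning_succ hsw hsafe hb ht'⟩
      · obtain ⟨b, t', hb⟩ := hne t
        exact ⟨b, ⟨t', hb⟩, fun hw' => absurd hw' hw⟩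
    · exact fun b hb => hb.1
  refine ⟨sig, ⟨hstrat, ?_⟩, hE, fun _ => hsucc⟩
  intro st ac hrun hout hw0
  have hwin : ∀ i, WinningState Tr φ' (st i) := by
    intro i
    induction i with
    | zero => exact hw0
    | succ k ih => exact (hout k).2 ih _ (hrun k)
  exact fun i => winning_mem (hwin i)

/-- **Assume-guarantee shield synthesis, Theorem 2.**
Let `φ = ⋂ i, φ i` be an `n`-agent safety property.  For each agent `i`, let
`Θ i` be the most permissive shield of `T` w.r.t. the guarantees `⋂ j < i, φ j`
of the previous agents, and let `σ i` be a shield for the projected LTS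
`(T_{Θ i})^i` w.r.t. `RPrj (I i) (φ i)`.  If the composition
`F s = ⋂ i, ext(σ i) s` exists (is a strategy of `T`), then every run of the
filtered LTS `T_F`, starting in a state that is winning for each `⋂ j < i, φ j`
in `T` and whose projections are winning in each `(T_{Θ i})^i`, is safe
w.r.t. `φ`. -/
theorem assume_guarantee_shield_synthesis
    {V : Type*} {D : V → Type*} {n : ℕ} {Act : Fin n → Type*}
    [Finite V] [∀ v, Finite (D v)] [∀ v, Nonempty (D v)] [∀ i, Finite (Act i)]
    (Tr : (∀ v, D v) → (∀ i, Act i) → (∀ v, D v) → Prop) (hT : NoDeadEnds Tr)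
    (I : Fin n → Set V) (φ : Fin n → Set (∀ v, D v))
    (σ : ∀ i : Fin n, (∀ v : I i, D (v : V)) → Set (Act i))
    (hσ : ∀ i, IsShield
      (ProjTr (FilterTr Tr (MPS Tr (⋂ j < i, φ j))) (I i) i)
      (RPrj (I i) (φ i)) (σ i))
    (hF : IsStrategy Tr (fun s => ⋂ i, ExtShield (I i) i (σ i) s))
    (st : ℕ → ∀ v, D v) (ac : ℕ → ∀ j, Act j)
    (hrun : IsRun (FilterTr Tr (fun s => ⋂ i, ExtShield (I i) i (σ i) s)) st ac)
    (hwin : ∀ i, WinningState Tr (⋂ j < i, φ j) (st 0) ∧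
      WinningState (ProjTr (FilterTr Tr (MPS Tr (⋂ j < i, φ j))) (I i) i)
        (RPrj (I i) (φ i)) (Prj (I i) (st 0))) :
    SafeRun (⋂ i, φ i) st := by
    classical
  set F : (∀ v, D v) → Set (∀ j, Act j) := fun s => ⋂ i, ExtShield (I i) i (σ i) s with hFdef
  set ψ : Fin n → Set (∀ v, D v) := fun j => ⋂ l < j, φ l with hψdef
  set P : ∀ j : Fin n, (∀ v : I j, D (v : V)) → Act j → (∀ v : I j, D (v : V)) → Prop :=
    fun j => ProjTr (FilterTr Tr (MPS Tr (ψ j))) (I j) j with hPdef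
  have B : ∀ m : ℕ, ∀ st' : ℕ → ∀ v, D v, ∀ ac' : ℕ → ∀ j, Act j,
      IsRun (FilterTr Tr F) st' ac' →
      (∀ l : Fin n, (l : ℕ) < m →
        WinningState (P l) (RPrj (I l) (φ l)) (Prj (I l) (st' 0))) →
      ∀ j : Fin n, (j : ℕ) < m →
        (∀ k, ac' k ∈ MPS Tr (ψ j) (st' k)) ∧ (∀ k, st' k ∈ φ j) ∧
        (∀ k, WinningState (P j) (RPrj (I j) (φ j)) (Prj (I j) (st' k))) := by
    intro m
    induction m using Nat.strong_induction_on with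
    | _ m IH =>
      intro st' ac' hrun' hyp j hj
      have Hprev : ∀ l : Fin n, (l : ℕ) < (j : ℕ) →
          (∀ k, ac' k ∈ MPS Tr (ψ l) (st' k)) ∧ (∀ k, st' k ∈ φ l) ∧
          (∀ k, WinningState (P l) (RPrj (I l) (φ l)) (Prj (I l) (st' k))) :=
        fun l hl => IH (j : ℕ) hj st' ac' hrun'
          (fun l' hl' => hyp l' (hl'.trans hj)) l hl
      have ha : ∀ k, ac' k ∈ MPS Tr (ψ j) (st' k) := by
        intro k
        obtain ⟨htr, hFk⟩ := hrun' k
        refine mps_mem hT ⟨st' (k + 1), htr⟩ ?_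
        intro s' hs'
        refine ⟨F, hF, ?_⟩
        intro st'' ac'' hrun'' hout'' h0''
        have hrunF : IsRun (FilterTr Tr F) st'' ac'' := fun i => ⟨hrun'' i, hout'' i⟩
        have hyp'' : ∀ l : Fin n, (l : ℕ) < (j : ℕ) →
            WinningState (P l) (RPrj (I l) (φ l)) (Prj (I l) (st'' 0)) := by
          intro l hl
          rw [h0'']
          obtain ⟨hmpsl, _, hwinl⟩ := Hprev l hl
          have htrans : P l (Prj (I l) (st' k)) (ac' k l) (Prj (I l) s') :=
            ⟨st' k, ac' k, s', ⟨hs', hmpsl k⟩, rfl, rfl, rfl⟩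
          have hbl : ac' k l ∈ σ l (Prj (I l) (st' k)) :=
            Set.mem_iInter.mp hFk l
          exact shield_step (hσ l) (hwinl k) hbl htrans
        have hB := IH (j : ℕ) hj st'' ac'' hrunF hyp''
        intro i
        refine Set.mem_iInter.mpr fun l => Set.mem_iInter.mpr fun hl => ?_
        exact (hB l hl).2.1 i
      have hprun : IsRun (P j) (fun k => Prj (I j) (st' k)) (fun k => ac' k j) :=
        fun k => ⟨st' k, ac' k, st' (k + 1), ⟨(hrun' k).1, ha k⟩, rfl, rfl, rfl⟩
      have hpout : IsOutcome (σ j) (fun k => Prj (I j) (st' k)) (fun k => ac' k j) :=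
        fun k => Set.mem_iInter.mp (hrun' k).2 j
      have hsafe := (hσ j).2 _ _ hprun hpout (hyp j hj)
      have hb : ∀ k, st' k ∈ φ j := fun k => hsafe k (st' k) rfl
      have hc : ∀ k, WinningState (P j) (RPrj (I j) (φ j)) (Prj (I j) (st' k)) := by
        intro k
        induction k with
        | zero => exact hyp j hj
        | succ k ihk => exact shield_step (hσ j) ihk (hpout k) (hprun k)
      exact ⟨ha, hb, hc⟩
  intro k
  exact Set.mem_iInter.mpr fun j =>
    (B n st ac hrun (fun l _ => (hwin l).2) j j.isLt).2.1 k
end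

section
/- The restricted projection in projection-based shield synthesis cannot be replaced by the standard projection: there exists a 2-agent LTS T with agent safety properties φ_1 = φ_2 = φ and local strategies σ_1, σ_2, where each σ_i is a shield for the projected LTS T^i with respect to the standard projection prj_i(φ_i) (all of its outcomes from winning states stay in prj_i(φ_i)), such that the filtered LTS T_F with F(s) = ext(σ_1)(s) ∩ ext(σ_2)(s) has a run starting in a state winning for φ in T that leaves φ. In particular, such an example is given by S = {0,1}², Act = {z,p}², the transitions from (0,0) being ((0,0),(z,z),(0,0)), ((0,0),(z,p),(0,1)), ((0,0),(p,z),(1,0)), ((0,0),(p,p),(1,1)) (with self-loops added at the other states to avoid dead ends), φ = {(0,0),(0,1),(1,0)}, prj_i projecting to the i-th coordinate, and σ_i(0) = {z,p}. -/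
/- The concrete 2-agent counterexample.  We encode the state space `{0,1}²` as
`Bool × Bool` (`false ↔ 0`, `true ↔ 1`) and the action space `{z,p}²` as
`Bool × Bool` (`false ↔ z`, `true ↔ p`). -/

/-- The transition relation: from `(0,0)`, the action `(x,y)` leads to the state
`(x,y)` (these are exactly the four listed transitions
`((0,0),(z,z),(0,0))`, `((0,0),(z,p),(0,1))`, `((0,0),(p,z),(1,0))`,
`((0,0),(p,p),(1,1))`); all other states have self-loops under every action,
added to avoid dead ends. -/
def ExTr : Bool × Bool → Bool × Bool → Bool × Bool → Prop :=
  fun s a s' =>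
    (s = (false, false) ∧ s' = a) ∨ (s ≠ (false, false) ∧ s' = s)

/-- The safety property `φ = {(0,0), (0,1), (1,0)}`. -/
def ExPhi : Set (Bool × Bool) := {x | x ≠ (true, true)}

/-- The projected LTS of agent 1 (projection to the first coordinate). -/
def ExProjTr1 : Bool → Bool → Bool → Prop :=
  fun o b o' => ∃ s a s', ExTr s a s' ∧ s.1 = o ∧ a.1 = b ∧ s'.1 = o'

/-- The projected LTS of agent 2 (projection to the second coordinate). -/
def ExProjTr2 : Bool → Bool → Bool → Prop :=
  fun o b o' => ∃ s a s', ExTr s a s' ∧ s.2 = o ∧ a.2 = b ∧ s'.2 = o'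

/-- The local strategy `σᵢ` allowing both actions `{z, p}` in every observation. -/
def ExSigma : Bool → Set Bool := fun _ => Set.univ

/-- The combined action filter `F(s) = ext(σ₁)(s) ∩ ext(σ₂)(s)`. -/
def ExF : Bool × Bool → Set (Bool × Bool) :=
  fun s => {a | a.1 ∈ ExSigma s.1} ∩ {a | a.2 ∈ ExSigma s.2}

/-- **Restricted projections are necessary.**
In the above 2-agent LTS with `φ₁ = φ₂ = φ`, the local strategies `σᵢ` are
shields for the projected LTSs `T^i` w.r.t. the *standard* projections
`prjᵢ(φ)`, yet the LTS filtered by `F = ext(σ₁) ∩ ext(σ₂)` has a run starting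
in a state winning for `φ` in `T` that leaves `φ`.  Hence the restricted
projection in projection-based shield synthesis cannot be replaced by the
standard projection. -/
theorem standard_projection_insufficient :
    NoDeadEnds ExTr ∧
    IsShield ExProjTr1 (Prod.fst '' ExPhi) ExSigma ∧
    IsShield ExProjTr2 (Prod.snd '' ExPhi) ExSigma ∧
    WinningState ExTr ExPhi (false, false) ∧
    ∃ st ac, IsRun (FilterTr ExTr ExF) st ac ∧
      st 0 = (false, false) ∧ ¬ SafeRun ExPhi st := by
  have henum : ∀ b : Bool, b ∈ Prod.fst '' ExPhi ∧ b ∈ Prod.snd '' ExPhi := by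
    intro b
    constructor
    · exact ⟨(b, false), by simp [ExPhi], rfl⟩
    · exact ⟨(false, b), by simp [ExPhi], rfl⟩
  have hen1 : ∀ (o b : Bool), b ∈ Enabled ExProjTr1 o := by
    intro o b
    cases o with
    | false =>
      exact ⟨b, (false, false), (b, false), (b, false),
        Or.inl ⟨rfl, rfl⟩, rfl, rfl, rfl⟩
    | true =>
      exact ⟨true, (true, false), (b, false), (true, false),
        Or.inr ⟨by simp, rfl⟩, rfl, rfl, rfl⟩
  have hen2 : ∀ (o b : Bool), b ∈ Enabled ExProjTr2 o := by
    intro o b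
    cases o with
    | false =>
      exact ⟨b, (false, false), (false, b), (false, b),
        Or.inl ⟨rfl, rfl⟩, rfl, rfl, rfl⟩
    | true =>
      exact ⟨true, (false, true), (false, b), (false, true),
        Or.inr ⟨by simp, rfl⟩, rfl, rfl, rfl⟩
  refine ⟨?_, ⟨?_, ?_⟩, ⟨?_, ?_⟩, ?_, ?_⟩
  · intro s
    by_cases h : s = (false, false)
    · exact ⟨(false, false), (false, false), Or.inl ⟨h, rfl⟩⟩
    · exact ⟨(false, false), s, Or.inr ⟨h, rfl⟩⟩
  · intro o
    exact ⟨⟨false, trivial⟩, fun b _ => hen1 o b⟩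
  · intro st ac _ _ _ i
    exact (henum (st i)).1
  · intro o
    exact ⟨⟨false, trivial⟩, fun b _ => hen2 o b⟩
  · intro st ac _ _ _ i
    exact (henum (st i)).2
  · refine ⟨fun _ => {(false, false)}, ⟨fun s => ⟨⟨(false, false), rfl⟩, ?_⟩, ?_⟩⟩
    · intro a ha
      rcases ha with rfl
      by_cases h : s = (false, false)
      · exact ⟨(false, false), Or.inl ⟨h, rfl⟩⟩
      · exact ⟨s, Or.inr ⟨h, rfl⟩⟩
    · intro st ac hrun hout h0
      have hconst : ∀ i, st i = (false, false) := by
        intro i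
        induction i with
        | zero => exact h0
        | succ n ih =>
          have := hrun n
          rcases this with ⟨_, h'⟩ | ⟨hne, _⟩
          · rw [h']; exact hout n
          · exact absurd ih hne
      intro i
      rw [hconst i]
      simp [ExPhi]
  · refine ⟨fun i => if i = 0 then (false, false) else (true, true),
      fun _ => (true, true), ?_, by simp, ?_⟩
    · intro i
      refine ⟨?_, trivial, trivial⟩
      cases i with
      | zero => exact Or.inl ⟨rfl, rfl⟩
      | succ n => exact Or.inr ⟨by simp, by simp⟩
    · intro h
      have := h 1
      simp [ExPhi] at this
end

section
/- Let M be an n-agent MDP, let i be an agent, and let J ⊆ {1,...,n} be a set of agent indices with i ∉ J such that agent i does not depend on any agent j ∈ J. Then for any two n-agent policies π = (π_1,...,π_n) and π' = (π'_1,...,π'_n) with π_m = π'_m for all m ∉ J, and for every local run ω of agent i of any finite length ℓ, the probability of observing ω is the same under both policies: Σ_{ρ of length ℓ with prj_i(ρ) = ω} Pr(ρ | π) = Σ_{ρ of length ℓ with prj_i(ρ) = ω} Pr(ρ | π'). (This is the in-distribution property underlying cascading learning: agents not yet instantiated cannot affect the observation distribution of an agent that does not depend on them.) -/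
/-- An agent policy: for every observation, a probability distribution over the
agent's actions. -/
def IsAgentPolicy {O B : Type*} [Fintype B] (p : O → B → ℝ) : Prop :=
  ∀ o, (∀ b, 0 ≤ p o b) ∧ (∑ b, p o b) = 1

/-- The probability `Pr(ρ | π)` of a finite run
`ρ = s₀ a₀ s₁ a₁ … a_{ℓ-1} s_ℓ` under the `n`-agent policy `π`, where the joint
policy is `π(s, a) = ∏ i, π i (prjᵢ s) (a i)`. -/
noncomputable def RunProb {V : Type*} {D : V → Type*} {n : ℕ} {Act : Fin n → Type*}
    (P : (∀ v, D v) → (∀ i, Act i) → (∀ v, D v) → ℝ)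
    (I : Fin n → Set V)
    (π : ∀ i, (∀ v : I i, D (v : V)) → Act i → ℝ)
    (ℓ : ℕ) (st : Fin (ℓ + 1) → ∀ v, D v) (ac : Fin ℓ → ∀ i, Act i) : ℝ :=
  ∏ t : Fin ℓ,
    (∏ i, π i (Prj (I i) (st t.castSucc)) (ac t i)) *
      P (st t.castSucc) (ac t) (st t.succ)

open Classical in
/-- The probability of observing the local run `ω = (os, ob)` of agent `i`:
the sum of `Pr(ρ | π)` over all runs `ρ` of length `ℓ` whose projection to
agent `i` is `ω`. -/
noncomputable def ObsProb {V : Type*} {D : V → Type*} {n : ℕ} {Act : Fin n → Type*}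
    [Fintype V] [DecidableEq V] [∀ v, Fintype (D v)] [∀ i, Fintype (Act i)]
    (P : (∀ v, D v) → (∀ i, Act i) → (∀ v, D v) → ℝ)
    (I : Fin n → Set V)
    (π : ∀ i, (∀ v : I i, D (v : V)) → Act i → ℝ)
    (i : Fin n) (ℓ : ℕ)
    (os : Fin (ℓ + 1) → ∀ v : I i, D (v : V)) (ob : Fin ℓ → Act i) : ℝ :=
  ∑ st : Fin (ℓ + 1) → ∀ v, D v, ∑ ac : Fin ℓ → ∀ j, Act j,
    if (∀ t : Fin ℓ, 0 < P (st t.castSucc) (ac t) (st t.succ)) ∧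
        (∀ t, Prj (I i) (st t) = os t) ∧ (∀ t, ac t i = ob t) then
      RunProb P I π ℓ st ac
    else 0

/-- Agent `i` depends on agent `j` if two `n`-agent policies differing only in
their `j`-th component give a different probability to some local run of
agent `i`. -/
def AgentDependsOn {V : Type*} {D : V → Type*} {n : ℕ} {Act : Fin n → Type*}
    [Fintype V] [DecidableEq V] [∀ v, Fintype (D v)] [∀ i, Fintype (Act i)]
    (P : (∀ v, D v) → (∀ i, Act i) → (∀ v, D v) → ℝ)
    (I : Fin n → Set V) (i j : Fin n) : Prop :=
  ∃ (ℓ : ℕ) (os : Fin (ℓ + 1) → ∀ v : I i, D (v : V)) (ob : Fin ℓ → Act i)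
    (π π' : ∀ m, (∀ v : I m, D (v : V)) → Act m → ℝ),
    (∀ m, IsAgentPolicy (π m)) ∧ (∀ m, IsAgentPolicy (π' m)) ∧
    (∀ m, m ≠ j → π m = π' m) ∧
    ObsProb P I π i ℓ os ob ≠ ObsProb P I π' i ℓ os ob

/-- **In-distribution property of cascading learning.**
If agent `i` does not depend on any agent in `J` (with `i ∉ J`), then any two
valid `n`-agent policies that agree on all components outside `J` assign the
same probability to every local run of agent `i` of any finite length. -/
theorem independent_agents_in_distribution
    {V : Type*} {D : V → Type*} {n : ℕ} {Act : Fin n → Type*}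
    [Fintype V] [DecidableEq V] [∀ v, Fintype (D v)] [∀ v, Nonempty (D v)]
    [∀ i, Fintype (Act i)] [∀ i, Nonempty (Act i)]
    (P : (∀ v, D v) → (∀ i, Act i) → (∀ v, D v) → ℝ) (hP : IsMDP P)
    (I : Fin n → Set V)
    (i : Fin n) (J : Set (Fin n)) (hiJ : i ∉ J)
    (hdep : ∀ j ∈ J, ¬ AgentDependsOn P I i j)
    (π π' : ∀ m, (∀ v : I m, D (v : V)) → Act m → ℝ)
    (hπ : ∀ m, IsAgentPolicy (π m)) (hπ' : ∀ m, IsAgentPolicy (π' m))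
    (hagree : ∀ m, m ∉ J → π m = π' m)
    (ℓ : ℕ) (os : Fin (ℓ + 1) → ∀ v : I i, D (v : V)) (ob : Fin ℓ → Act i) :
    ObsProb P I π i ℓ os ob = ObsProb P I π' i ℓ os ob := by
  classical
  have key : ∀ S : Finset (Fin n), ↑S ⊆ J →
      ObsProb P I π i ℓ os ob
        = ObsProb P I (fun m => if m ∈ S then π' m else π m) i ℓ os ob := by
    intro S
    induction S using Finset.induction_on with
    | empty => intro _; simp
    | @insert j S hjS ih =>
      intro hsub
      have hjJ : j ∈ J := hsub (by simp)
      have hS : ↑S ⊆ J := fun x hx => hsub (by simp [hx])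
      rw [ih hS]
      by_contra hne
      refine hdep j hjJ ⟨ℓ, os, ob,
        (fun m => if m ∈ S then π' m else π m),
        (fun m => if m ∈ insert j S then π' m else π m), ?_, ?_, ?_, hne⟩
      · intro m; by_cases h : m ∈ S <;> simp [h, hπ m, hπ' m]
      · intro m; by_cases h : m ∈ insert j S <;> simp [h, hπ m, hπ' m]
      · intro m hm
        simp [Finset.mem_insert, hm]
  have h := key (Finset.univ.filter (· ∈ J)) (by intro x hx; simpa using hx)
  have heq : (fun m => if m ∈ Finset.univ.filter (· ∈ J) then π' m else π m) = π' := by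
    funext m
    by_cases h : m ∈ J
    · simp [h]
    · simp [h, hagree m h]
  rwa [heq] at h
end
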